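/- Let T = (1/q)·(T₁ + ⋯ + T_q), where for each i, Tᵢ = (1/m₁)·(Xᵢ₁ + ⋯ + Xᵢ_{m₁}) − (1/m₂)·(Yᵢ₁ + ⋯ + Yᵢ_{m₂}) with the family (Xᵢ₁, …, Xᵢ_{m₁}, Yᵢ₁, …, Yᵢ_{m₂}) consisting of independent real random variables, each with zero mean and each almost surely contained in an interval of length at most 1 (the random variables Tᵢ for different i are allowed to be arbitrarily dependent on each other). Then for every ε > 0, P[T ≥ ε] ≤ exp(−2ε² / (1/m₁ + 1/m₂)). -/

import Mathlib

open MeasureTheory ProbabilityTheory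

lemma aux_key (p : ℝ) (hp0 : 0 ≤ p) (hp1 : p ≤ 1) (u : ℝ) :
    p * Real.exp (-(1 - p) * u) + (1 - p) * Real.exp (p * u) ≤ Real.exp (u ^ 2 / 8) := by
  have hu8 : (0:ℝ) ≤ u ^ 2 / 8 := by positivity
  rcases eq_or_lt_of_le hp0 with h0 | hp0'
  · rw [← h0]
    simpa using Real.one_le_exp hu8
  rcases eq_or_lt_of_le hp1 with h1 | hp1'
  · rw [h1]
    simpa using Real.one_le_exp hu8
  obtain ⟨r, hrdef⟩ : ∃ r : ℝ, r = 1 - p := ⟨_, rfl⟩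
  have hr0 : 0 < r := by rw [hrdef]; linarith
  have hD : ∀ x : ℝ, 0 < p + r * Real.exp x := fun x => by positivity
  obtain ⟨g, hgdef⟩ : ∃ g : ℝ → ℝ, g = fun x => x ^ 2 / 8 + r * x - Real.log (p + r * Real.exp x) := ⟨_, rfl⟩
  obtain ⟨g1, hg1def⟩ : ∃ g1 : ℝ → ℝ, g1 = fun x => x / 4 + r - r * Real.exp x / (p + r * Real.exp x) := ⟨_, rfl⟩
  have hDd : ∀ x : ℝ, HasDerivAt (fun y => p + r * Real.exp y) (r * Real.exp x) x := fun x =>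
    ((Real.hasDerivAt_exp x).const_mul r).const_add p
  have hgd : ∀ x : ℝ, HasDerivAt g (g1 x) x := by
    intro x
    rw [hgdef, hg1def]
    have h1 : HasDerivAt (fun y : ℝ => y ^ 2 / 8) (x / 4) x := by
      have := (hasDerivAt_pow 2 x).div_const 8
      refine this.congr_deriv ?_
      norm_num
      ring
    have h2 : HasDerivAt (fun y : ℝ => r * y) r x := by
      simpa using (hasDerivAt_id x).const_mul r
    have h3 : HasDerivAt (fun y => Real.log (p + r * Real.exp y))
        (r * Real.exp x / (p + r * Real.exp x)) x := (hDd x).log (hD x).ne'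
    exact (h1.add h2).sub h3
  have hg1d : ∀ x : ℝ, HasDerivAt g1
      ((1 : ℝ) / 4 - (r * Real.exp x * (p + r * Real.exp x) -
        r * Real.exp x * (r * Real.exp x)) / (p + r * Real.exp x) ^ 2) x := by
    intro x
    have h1 : HasDerivAt (fun y : ℝ => y / 4 + r) ((1 : ℝ) / 4) x := by
      simpa using ((hasDerivAt_id x).div_const 4).add_const r
    have h2 : HasDerivAt (fun y => r * Real.exp y / (p + r * Real.exp y))
        ((r * Real.exp x * (p + r * Real.exp x) -
          r * Real.exp x * (r * Real.exp x)) / (p + r * Real.exp x) ^ 2) x :=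
      ((Real.hasDerivAt_exp x).const_mul r).div (hDd x) (hD x).ne'
    rw [hg1def]
    exact h1.sub h2
  have hg1nonneg : ∀ x : ℝ, 0 ≤ (1 : ℝ) / 4 - (r * Real.exp x * (p + r * Real.exp x) -
      r * Real.exp x * (r * Real.exp x)) / (p + r * Real.exp x) ^ 2 := by
    intro x
    have hE := Real.exp_pos x
    have heq : r * Real.exp x * (p + r * Real.exp x) -
        r * Real.exp x * (r * Real.exp x) = p * (r * Real.exp x) := by ring
    have h : (r * Real.exp x * (p + r * Real.exp x) -
        r * Real.exp x * (r * Real.exp x)) / (p + r * Real.exp x) ^ 2 ≤ 1 / 4 := by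
      rw [heq, div_le_iff₀ (by positivity)]
      have key : (p + r * Real.exp x) ^ 2 - 4 * (p * (r * Real.exp x))
          = (p - r * Real.exp x) ^ 2 := by ring
      linarith [sq_nonneg (p - r * Real.exp x), key]
    linarith
  have hg1mono : Monotone g1 := by
    apply monotone_of_deriv_nonneg (fun x => (hg1d x).differentiableAt)
    intro x
    rw [(hg1d x).deriv]
    exact hg1nonneg x
  have hpr1 : p + r = 1 := by rw [hrdef]; ring
  have hg10 : g1 0 = 0 := by simp [hg1def, hpr1]
  have hg0 : g 0 = 0 := by simp [hgdef, hpr1]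
  have hgnonneg : ∀ x : ℝ, 0 ≤ g x := by
    intro x
    rcases le_total 0 x with hx | hx
    · have hmono : MonotoneOn g (Set.Ici (0 : ℝ)) := by
        apply monotoneOn_of_deriv_nonneg (convex_Ici 0)
          (fun y _ => (hgd y).differentiableAt.continuousAt.continuousWithinAt)
          (fun y _ => (hgd y).differentiableAt.differentiableWithinAt)
        intro y hy
        rw [(hgd y).deriv]
        rw [← hg10]
        exact hg1mono (le_of_lt (by simpa using hy))
      have := hmono (Set.self_mem_Ici) hx hx
      rwa [hg0] at this
    · have hmono : AntitoneOn g (Set.Iic (0 : ℝ)) := by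
        apply antitoneOn_of_deriv_nonpos (convex_Iic 0)
          (fun y _ => (hgd y).differentiableAt.continuousAt.continuousWithinAt)
          (fun y _ => (hgd y).differentiableAt.differentiableWithinAt)
        intro y hy
        rw [(hgd y).deriv]
        rw [← hg10]
        exact hg1mono (le_of_lt (by simpa using hy))
      have := hmono hx (Set.self_mem_Iic) hx
      rwa [hg0] at this
  -- conclude
  have hkey : p + r * Real.exp u ≤ Real.exp (u ^ 2 / 8 + r * u) := by
    have h := hgnonneg u
    have : Real.log (p + r * Real.exp u) ≤ u ^ 2 / 8 + r * u := by
      simp only [hgdef] at h; linarith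
    calc p + r * Real.exp u = Real.exp (Real.log (p + r * Real.exp u)) :=
          (Real.exp_log (hD u)).symm
      _ ≤ _ := Real.exp_le_exp.2 this
  have heq : p * Real.exp (-(1 - p) * u) + (1 - p) * Real.exp (p * u)
      = Real.exp (-(r * u)) * (p + r * Real.exp u) := by
    have e1 : -(1 - p) * u = -(r * u) := by rw [hrdef]; ring
    have e2 : p * u = -(r * u) + u := by rw [hrdef]; ring
    rw [e1, e2, Real.exp_add, hrdef]
    ring
  rw [heq]
  calc Real.exp (-(r * u)) * (p + r * Real.exp u)
      ≤ Real.exp (-(r * u)) * Real.exp (u ^ 2 / 8 + r * u) := by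
        apply mul_le_mul_of_nonneg_left hkey (Real.exp_pos _).le
    _ = Real.exp (u ^ 2 / 8) := by rw [← Real.exp_add]; congr 1; ring

lemma my_integrable_of_bounded {Ω : Type*} [MeasurableSpace Ω] (P : Measure Ω)
    [IsProbabilityMeasure P] (f : Ω → ℝ) (hf : Measurable f) (a b : ℝ)
    (hab : ∀ᵐ ω ∂P, a ≤ f ω ∧ f ω ≤ b) : Integrable f P := by
  apply Integrable.mono' (integrable_const (max |a| |b|)) hf.aestronglyMeasurable
  filter_upwards [hab] with ω hω
  rw [Real.norm_eq_abs]
  rcases hω with ⟨h1, h2⟩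
  rw [abs_le]
  constructor
  · have := neg_abs_le a
    have := le_max_left |a| |b|
    linarith
  · have := le_abs_self b
    have := le_max_right |a| |b|
    linarith

lemma my_integrable_exp_of_bounded {Ω : Type*} [MeasurableSpace Ω] (P : Measure Ω)
    [IsProbabilityMeasure P] (f : Ω → ℝ) (hf : Measurable f) (a b : ℝ)
    (hab : ∀ᵐ ω ∂P, a ≤ f ω ∧ f ω ≤ b) (s : ℝ) :
    Integrable (fun ω => Real.exp (s * f ω)) P := by
  apply Integrable.mono' (integrable_const (Real.exp (|s| * max |a| |b|)))
    ((hf.const_mul s).exp.aestronglyMeasurable)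
  filter_upwards [hab] with ω hω
  rw [Real.norm_eq_abs, abs_of_pos (Real.exp_pos _)]
  apply Real.exp_le_exp.2
  calc s * f ω ≤ |s * f ω| := le_abs_self _
    _ = |s| * |f ω| := abs_mul _ _
    _ ≤ |s| * max |a| |b| := by
        apply mul_le_mul_of_nonneg_left _ (abs_nonneg s)
        rcases hω with ⟨h1, h2⟩
        rw [abs_le]
        constructor
        · have := neg_abs_le a
          have := le_max_left |a| |b|
          linarith
        · have := le_abs_self b
          have := le_max_right |a| |b|
          linarith


lemma my_hoeffding_mgf {Ω : Type*} [MeasurableSpace Ω] (P : Measure Ω)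
    [IsProbabilityMeasure P] (Z : Ω → ℝ) (hZ : Measurable Z) (a b : ℝ)
    (hab : ∀ᵐ ω ∂P, a ≤ Z ω ∧ Z ω ≤ b) (hmean : ∫ ω, Z ω ∂P = 0) (s : ℝ) :
    mgf Z P s ≤ Real.exp (s ^ 2 * (b - a) ^ 2 / 8) := by
  have hZint : Integrable Z P := my_integrable_of_bounded P Z hZ a b hab
  have ha0 : a ≤ 0 := by
    have h := integral_mono_ae (integrable_const a) hZint (hab.mono fun ω h => h.1)
    rwa [hmean, integral_const, probReal_univ, smul_eq_mul, one_mul] at h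
  have hb0 : 0 ≤ b := by
    have h := integral_mono_ae hZint (integrable_const b) (hab.mono fun ω h => h.2)
    rwa [hmean, integral_const, probReal_univ, smul_eq_mul, one_mul] at h
  rcases (ha0.trans hb0).lt_or_eq with hlt | heq
  · -- a < b
    have hba : (0 : ℝ) < b - a := by linarith
    set p : ℝ := b / (b - a) with hpdef
    have hp0 : 0 ≤ p := div_nonneg hb0 hba.le
    have hp1 : p ≤ 1 := (div_le_one hba).2 (by linarith)
    -- pointwise convexity bound
    have hpt : ∀ᵐ ω ∂P, Real.exp (s * Z ω) ≤
        (Real.exp (s * a) / (b - a)) * (b - Z ω) + (Real.exp (s * b) / (b - a)) * (Z ω - a) := by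
      filter_upwards [hab] with ω hω
      rcases hω with ⟨h1, h2⟩
      have hθ0 : (0 : ℝ) ≤ (b - Z ω) / (b - a) := div_nonneg (by linarith) hba.le
      have hθ0' : (0 : ℝ) ≤ (Z ω - a) / (b - a) := div_nonneg (by linarith) hba.le
      have hθsum : (b - Z ω) / (b - a) + (Z ω - a) / (b - a) = 1 := by
        have hh : (b - Z ω) + (Z ω - a) = b - a := by ring
        rw [← add_div, hh, div_self hba.ne']
      have hconv := convexOn_exp.2 (Set.mem_univ (s * a)) (Set.mem_univ (s * b))
        hθ0 hθ0' hθsum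
      refine le_trans (le_of_eq ?_) (hconv.trans (le_of_eq ?_))
      · congr 1
        simp only [smul_eq_mul]
        field_simp
        ring
      · simp only [smul_eq_mul]
        ring
    have hint1 : Integrable (fun ω => (Real.exp (s * a) / (b - a)) * (b - Z ω)
        + (Real.exp (s * b) / (b - a)) * (Z ω - a)) P := by
      apply Integrable.add
      · exact (((integrable_const b).sub hZint).const_mul _)
      · exact ((hZint.sub (integrable_const a)).const_mul _)
    have hexpint : Integrable (fun ω => Real.exp (s * Z ω)) P :=
      my_integrable_exp_of_bounded P Z hZ a b hab s
    have I1 : Integrable (fun ω => Real.exp (s * a) / (b - a) * (b - Z ω)) P := by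
      apply Integrable.const_mul
      exact (integrable_const b).sub hZint
    have I2 : Integrable (fun ω => Real.exp (s * b) / (b - a) * (Z ω - a)) P := by
      apply Integrable.const_mul
      exact hZint.sub (integrable_const a)
    have J1 : ∫ ω, (b - Z ω) ∂P = b := by
      rw [integral_sub (integrable_const b) hZint, hmean, integral_const, probReal_univ,
        smul_eq_mul, one_mul, sub_zero]
    have J2 : ∫ ω, (Z ω - a) ∂P = -a := by
      rw [integral_sub hZint (integrable_const a), hmean, integral_const, probReal_univ,
        smul_eq_mul, one_mul, zero_sub]
    have hmgf : mgf Z P s ≤ p * Real.exp (s * a) + (1 - p) * Real.exp (s * b) := by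
      have h := integral_mono_ae hexpint hint1 hpt
      rw [mgf]
      refine h.trans_eq ?_
      rw [integral_add I1 I2, integral_const_mul, integral_const_mul, J1, J2, hpdef]
      field_simp
      ring
    refine hmgf.trans ?_
    have e1 : s * a = -(1 - p) * (s * (b - a)) := by
      rw [hpdef]
      field_simp
      ring
    have e2 : s * b = p * (s * (b - a)) := by
      rw [hpdef]
      field_simp
    have e3 : (s * (b - a)) ^ 2 / 8 = s ^ 2 * (b - a) ^ 2 / 8 := by ring
    rw [e1, e2]
    calc p * Real.exp (-(1 - p) * (s * (b - a))) + (1 - p) * Real.exp (p * (s * (b - a)))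
        ≤ Real.exp ((s * (b - a)) ^ 2 / 8) := aux_key p hp0 hp1 _
      _ = _ := by rw [e3]
  · -- a = b, hence a = b = 0 and Z = 0 a.e.
    have ha : a = 0 := by linarith [heq]
    have hb : b = 0 := by linarith [heq]
    have hZ0 : ∀ᵐ ω ∂P, Real.exp (s * Z ω) = 1 := by
      filter_upwards [hab] with ω hω
      have : Z ω = 0 := le_antisymm (hb ▸ hω.2) (ha ▸ hω.1)
      simp [this]
    rw [mgf, integral_congr_ae hZ0, integral_const, probReal_univ,
      smul_eq_mul, one_mul]
    exact Real.one_le_exp (by positivity)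

/-- Two-block Hoeffding-type inequality: `T = (1/q)·(T₁ + ⋯ + T_q)` where each
block `Tᵢ = (1/m₁)·(Xᵢ₁ + ⋯ + Xᵢ_{m₁}) − (1/m₂)·(Yᵢ₁ + ⋯ + Yᵢ_{m₂})`, the
family `(Xᵢ₁, …, Xᵢ_{m₁}, Yᵢ₁, …, Yᵢ_{m₂})` (indexed by `Fin m₁ ⊕ Fin m₂`)
consisting of independent, zero-mean random variables, each almost surely
contained in an interval of length at most 1; the blocks may be arbitrarily
dependent on each other.  Then `P[T ≥ ε] ≤ exp(-2ε²/(1/m₁ + 1/m₂))`. -/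
theorem stmt_11 {Ω : Type*} [MeasurableSpace Ω] (P : Measure Ω)
    [IsProbabilityMeasure P] (q m₁ m₂ : ℕ) (hq : 0 < q) (hm₁ : 0 < m₁)
    (hm₂ : 0 < m₂)
    (X : Fin q → Fin m₁ → Ω → ℝ) (Y : Fin q → Fin m₂ → Ω → ℝ)
    (aX bX : Fin q → Fin m₁ → ℝ) (aY bY : Fin q → Fin m₂ → ℝ)
    (hmeasX : ∀ i j, Measurable (X i j)) (hmeasY : ∀ i j, Measurable (Y i j))
    (hindep : ∀ i, iIndepFun
      (Sum.elim (X i) (Y i)) P)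
    (hmeanX : ∀ i j, ∫ ω, X i j ω ∂P = 0)
    (hmeanY : ∀ i j, ∫ ω, Y i j ω ∂P = 0)
    (hbddX : ∀ i j, ∀ᵐ ω ∂P, aX i j ≤ X i j ω ∧ X i j ω ≤ bX i j)
    (hbddY : ∀ i j, ∀ᵐ ω ∂P, aY i j ≤ Y i j ω ∧ Y i j ω ≤ bY i j)
    (hlenX : ∀ i j, bX i j - aX i j ≤ 1)
    (hlenY : ∀ i j, bY i j - aY i j ≤ 1)
    (ε : ℝ) (hε : 0 < ε) :
    P {ω | ε ≤ (1 / (q : ℝ)) * ∑ i,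
        ((1 / (m₁ : ℝ)) * ∑ j, X i j ω - (1 / (m₂ : ℝ)) * ∑ j, Y i j ω)}
      ≤ ENNReal.ofReal
          (Real.exp (-2 * ε ^ 2 / (1 / (m₁ : ℝ) + 1 / (m₂ : ℝ)))) := by
  classical
  have hm₁' : (0:ℝ) < m₁ := by exact_mod_cast hm₁
  have hm₂' : (0:ℝ) < m₂ := by exact_mod_cast hm₂
  have hq' : (0:ℝ) < q := by exact_mod_cast hq
  obtain ⟨v, hvdef⟩ : ∃ v : ℝ, v = 1/(m₁:ℝ) + 1/(m₂:ℝ) := ⟨_, rfl⟩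
  have hv0 : 0 < v := by rw [hvdef]; positivity
  obtain ⟨t, htdef⟩ : ∃ t : ℝ, t = 4*ε/v := ⟨_, rfl⟩
  have ht0 : 0 ≤ t := by rw [htdef]; positivity
  set c : Fin m₁ ⊕ Fin m₂ → ℝ := Sum.elim (fun _ => 1/(m₁:ℝ)) (fun _ => -(1/(m₂:ℝ))) with hcdef
  set Z : Fin q → (Fin m₁ ⊕ Fin m₂) → Ω → ℝ :=
    fun i k => (fun x => c k * x) ∘ (Sum.elim (X i) (Y i) k) with hZdef
  set T : Ω → ℝ := fun ω => (1 / (q : ℝ)) * ∑ i,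
      ((1 / (m₁ : ℝ)) * ∑ j, X i j ω - (1 / (m₂ : ℝ)) * ∑ j, Y i j ω) with hTdef
  -- independence within each block
  have hindepZ : ∀ i, iIndepFun (Z i) P := by
    intro i
    exact (hindep i).comp (fun k x => c k * x) (fun k => measurable_id.const_mul _)
  have hmeasZ : ∀ i k, Measurable (Z i k) := by
    intro i k
    cases k with
    | inl j => exact (hmeasX i j).const_mul _
    | inr j => exact (hmeasY i j).const_mul _
  -- a.e. bounds for scaled variables
  have hbddZl : ∀ i j, ∀ᵐ ω ∂P,
      (1/(m₁:ℝ)) * aX i j ≤ Z i (Sum.inl j) ω ∧ Z i (Sum.inl j) ω ≤ (1/(m₁:ℝ)) * bX i j := by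
    intro i j
    filter_upwards [hbddX i j] with ω hω
    have hc0 : (0:ℝ) ≤ 1/(m₁:ℝ) := by positivity
    have h1 := mul_le_mul_of_nonneg_left hω.1 hc0
    have h2 := mul_le_mul_of_nonneg_left hω.2 hc0
    exact ⟨h1, h2⟩
  have hbddZr : ∀ i j, ∀ᵐ ω ∂P,
      -(1/(m₂:ℝ)) * bY i j ≤ Z i (Sum.inr j) ω ∧ Z i (Sum.inr j) ω ≤ -(1/(m₂:ℝ)) * aY i j := by
    intro i j
    filter_upwards [hbddY i j] with ω hω
    have hc0 : (0:ℝ) ≤ 1/(m₂:ℝ) := by positivity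
    have h1 := mul_le_mul_of_nonneg_left hω.1 hc0
    have h2 := mul_le_mul_of_nonneg_left hω.2 hc0
    constructor
    · show -(1/(m₂:ℝ)) * bY i j ≤ -(1/(m₂:ℝ)) * Y i j ω
      linarith
    · show -(1/(m₂:ℝ)) * Y i j ω ≤ -(1/(m₂:ℝ)) * aY i j
      linarith
  -- zero means
  have hmeanZ : ∀ i k, ∫ ω, Z i k ω ∂P = 0 := by
    intro i k
    cases k with
    | inl j =>
        show ∫ ω, (1/(m₁:ℝ)) * X i j ω ∂P = 0
        rw [integral_const_mul, hmeanX i j, mul_zero]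
    | inr j =>
        show ∫ ω, -(1/(m₂:ℝ)) * Y i j ω ∂P = 0
        rw [integral_const_mul, hmeanY i j, mul_zero]
  -- per-factor mgf bound
  have hfac : ∀ i k, mgf (Z i k) P t ≤
      Real.exp (t^2 * (Sum.elim (fun _ => (1/(m₁:ℝ))) (fun _ => (1/(m₂:ℝ))) k)^2 / 8) := by
    intro i k
    cases k with
    | inl j =>
        have h := my_hoeffding_mgf P (Z i (Sum.inl j)) (hmeasZ i (Sum.inl j)) _ _
          (hbddZl i j) (hmeanZ i (Sum.inl j)) t
        refine h.trans (Real.exp_le_exp.2 ?_)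
        have hex : aX i j ≤ bX i j := by
          obtain ⟨ω, h1, h2⟩ := (hbddX i j).exists
          linarith
        have hnn : (0:ℝ) ≤ (1/(m₁:ℝ)) * bX i j - (1/(m₁:ℝ)) * aX i j := by
          have := mul_le_mul_of_nonneg_left hex (by positivity : (0:ℝ) ≤ 1/(m₁:ℝ))
          linarith
        have hlen : (1/(m₁:ℝ)) * bX i j - (1/(m₁:ℝ)) * aX i j ≤ 1/(m₁:ℝ) := by
          have h1 := mul_le_mul_of_nonneg_left (hlenX i j) (by positivity : (0:ℝ) ≤ 1/(m₁:ℝ))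
          have h2 : (1/(m₁:ℝ)) * (bX i j - aX i j)
              = (1/(m₁:ℝ)) * bX i j - (1/(m₁:ℝ)) * aX i j := by ring
          rw [h2] at h1
          linarith
        have hsq : ((1/(m₁:ℝ)) * bX i j - (1/(m₁:ℝ)) * aX i j)^2 ≤ (1/(m₁:ℝ))^2 :=
          pow_le_pow_left₀ hnn hlen 2
        show t ^ 2 * ((1/(m₁:ℝ)) * bX i j - (1/(m₁:ℝ)) * aX i j) ^ 2 / 8
            ≤ t ^ 2 * (1/(m₁:ℝ)) ^ 2 / 8
        have h3 := mul_le_mul_of_nonneg_left hsq (sq_nonneg t)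
        linarith
    | inr j =>
        have h := my_hoeffding_mgf P (Z i (Sum.inr j)) (hmeasZ i (Sum.inr j)) _ _
          (hbddZr i j) (hmeanZ i (Sum.inr j)) t
        refine h.trans (Real.exp_le_exp.2 ?_)
        have hex : aY i j ≤ bY i j := by
          obtain ⟨ω, h1, h2⟩ := (hbddY i j).exists
          linarith
        have hnn : (0:ℝ) ≤ -(1/(m₂:ℝ)) * aY i j - (-(1/(m₂:ℝ)) * bY i j) := by
          have := mul_le_mul_of_nonneg_left hex (by positivity : (0:ℝ) ≤ 1/(m₂:ℝ))
          linarith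
        have hlen : -(1/(m₂:ℝ)) * aY i j - (-(1/(m₂:ℝ)) * bY i j) ≤ 1/(m₂:ℝ) := by
          have h1 := mul_le_mul_of_nonneg_left (hlenY i j) (by positivity : (0:ℝ) ≤ 1/(m₂:ℝ))
          have h2 : (1/(m₂:ℝ)) * (bY i j - aY i j)
              = -(1/(m₂:ℝ)) * aY i j - (-(1/(m₂:ℝ)) * bY i j) := by ring
          rw [h2] at h1
          linarith
        have hsq : (-(1/(m₂:ℝ)) * aY i j - (-(1/(m₂:ℝ)) * bY i j))^2 ≤ (1/(m₂:ℝ))^2 :=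
          pow_le_pow_left₀ hnn hlen 2
        show t ^ 2 * (-(1/(m₂:ℝ)) * aY i j - (-(1/(m₂:ℝ)) * bY i j)) ^ 2 / 8
            ≤ t ^ 2 * (1/(m₂:ℝ)) ^ 2 / 8
        have h3 := mul_le_mul_of_nonneg_left hsq (sq_nonneg t)
        linarith
  -- block mgf bound
  have hblock : ∀ i, mgf (∑ k, Z i k) P t ≤ Real.exp (t^2 * v / 8) := by
    intro i
    rw [(hindepZ i).mgf_sum (hmeasZ i) Finset.univ]
    calc ∏ k, mgf (Z i k) P t
        ≤ ∏ k : Fin m₁ ⊕ Fin m₂, Real.exp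
            (t^2 * (Sum.elim (fun _ => (1/(m₁:ℝ))) (fun _ => (1/(m₂:ℝ))) k)^2 / 8) :=
          Finset.prod_le_prod (fun k _ => mgf_nonneg) (fun k _ => hfac i k)
      _ = Real.exp (∑ k : Fin m₁ ⊕ Fin m₂,
            t^2 * (Sum.elim (fun _ => (1/(m₁:ℝ))) (fun _ => (1/(m₂:ℝ))) k)^2 / 8) :=
          (Real.exp_sum _ _).symm
      _ = Real.exp (t^2 * v / 8) := by
          congr 1
          rw [Fintype.sum_sum_type]
          simp only [Sum.elim_inl, Sum.elim_inr, Finset.sum_const, Finset.card_univ,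
            Fintype.card_fin, nsmul_eq_mul]
          rw [hvdef]
          field_simp
  -- integrability of block exponentials
  have hblockint : ∀ i, Integrable (fun ω => Real.exp (t * (∑ k, Z i k) ω)) P := by
    intro i
    apply (hindepZ i).integrable_exp_mul_sum (hmeasZ i)
    intro k _
    cases k with
    | inl j => exact my_integrable_exp_of_bounded P _ (hmeasZ i (Sum.inl j)) _ _ (hbddZl i j) t
    | inr j => exact my_integrable_exp_of_bounded P _ (hmeasZ i (Sum.inr j)) _ _ (hbddZr i j) t
  -- block sums compute T
  have hB : ∀ i (ω : Ω), (∑ k, Z i k) ω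
      = (1 / (m₁ : ℝ)) * ∑ j, X i j ω - (1 / (m₂ : ℝ)) * ∑ j, Y i j ω := by
    intro i ω
    rw [Finset.sum_apply, Fintype.sum_sum_type]
    have e1 : ∀ j : Fin m₁, Z i (Sum.inl j) ω = (1/(m₁:ℝ)) * X i j ω := fun j => rfl
    have e2 : ∀ j : Fin m₂, Z i (Sum.inr j) ω = -(1/(m₂:ℝ)) * Y i j ω := fun j => rfl
    rw [Finset.sum_congr rfl (fun j _ => e1 j), Finset.sum_congr rfl (fun j _ => e2 j),
      ← Finset.mul_sum, ← Finset.mul_sum]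
    ring
  have hsum1 : ∑ _i : Fin q, (1/(q:ℝ)) = 1 := by
    rw [Finset.sum_const, Finset.card_univ, Fintype.card_fin, nsmul_eq_mul]
    field_simp
  -- Jensen step (pointwise)
  have hJ : ∀ ω, Real.exp (t * T ω) ≤ ∑ i, (1/(q:ℝ)) * Real.exp (t * (∑ k, Z i k) ω) := by
    intro ω
    have h := convexOn_exp.map_sum_le (t := Finset.univ) (w := fun _ : Fin q => 1/(q:ℝ))
      (p := fun i => t * (∑ k, Z i k) ω) (fun i _ => by positivity) hsum1
      (fun i _ => Set.mem_univ _)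
    have harg : ∑ i, (1/(q:ℝ)) • (t * (∑ k, Z i k) ω) = t * T ω := by
      simp only [smul_eq_mul, hTdef]
      calc ∑ i, (1/(q:ℝ)) * (t * (∑ k, Z i k) ω)
          = ∑ i, (t * (1/(q:ℝ))) * ((1 / (m₁ : ℝ)) * ∑ j, X i j ω
              - (1 / (m₂ : ℝ)) * ∑ j, Y i j ω) :=
            Finset.sum_congr rfl (fun i _ => by rw [hB i ω]; ring)
        _ = (t * (1/(q:ℝ))) * ∑ i, ((1 / (m₁ : ℝ)) * ∑ j, X i j ω
              - (1 / (m₂ : ℝ)) * ∑ j, Y i j ω) := (Finset.mul_sum _ _ _).symm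
        _ = t * ((1 / (q : ℝ)) * ∑ i, ((1 / (m₁ : ℝ)) * ∑ j, X i j ω
              - (1 / (m₂ : ℝ)) * ∑ j, Y i j ω)) := by ring
    rw [harg] at h
    exact h.trans (le_of_eq (Finset.sum_congr rfl (fun i _ => by rw [smul_eq_mul])))
  -- measurability of T
  have hTmeas : Measurable T := by
    apply Measurable.const_mul
    apply Finset.measurable_sum
    intro i _
    exact ((Finset.measurable_sum Finset.univ (fun j _ => hmeasX i j)).const_mul _).sub
      ((Finset.measurable_sum Finset.univ (fun j _ => hmeasY i j)).const_mul _)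
  -- integrability
  have hRHSint : Integrable (fun ω => ∑ i, (1/(q:ℝ)) * Real.exp (t * (∑ k, Z i k) ω)) P :=
    integrable_finset_sum _ (fun i _ => (hblockint i).const_mul _)
  have hexpT : Integrable (fun ω => Real.exp (t * T ω)) P := by
    apply Integrable.mono' hRHSint ((hTmeas.const_mul t).exp.aestronglyMeasurable)
    refine Filter.Eventually.of_forall fun ω => ?_
    rw [Real.norm_eq_abs, abs_of_pos (Real.exp_pos _)]
    exact hJ ω
  -- mgf of T bound
  have hmgfT : mgf T P t ≤ Real.exp (t^2 * v / 8) := by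
    rw [mgf]
    calc ∫ ω, Real.exp (t * T ω) ∂P
        ≤ ∫ ω, ∑ i, (1/(q:ℝ)) * Real.exp (t * (∑ k, Z i k) ω) ∂P :=
          integral_mono_ae hexpT hRHSint (Filter.Eventually.of_forall hJ)
      _ = ∑ i, (1/(q:ℝ)) * mgf (∑ k, Z i k) P t := by
          rw [integral_finset_sum _ (fun i _ => (hblockint i).const_mul _)]
          exact Finset.sum_congr rfl fun i _ => by rw [integral_const_mul]; rfl
      _ ≤ ∑ _i : Fin q, (1/(q:ℝ)) * Real.exp (t^2 * v / 8) :=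
          Finset.sum_le_sum fun i _ =>
            mul_le_mul_of_nonneg_left (hblock i) (by positivity)
      _ = Real.exp (t^2 * v / 8) := by rw [← Finset.sum_mul, hsum1, one_mul]
  -- Chernoff
  have hch := measure_ge_le_exp_mul_mgf (μ := P) (X := T) ε ht0 hexpT
  have hfinal : (P {ω | ε ≤ T ω}).toReal
      ≤ Real.exp (-2 * ε ^ 2 / (1 / (m₁ : ℝ) + 1 / (m₂ : ℝ))) := by
    refine hch.trans ?_
    calc Real.exp (-t * ε) * mgf T P t
        ≤ Real.exp (-t * ε) * Real.exp (t^2 * v / 8) :=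
          mul_le_mul_of_nonneg_left hmgfT (Real.exp_pos _).le
      _ = Real.exp (-t * ε + t^2 * v / 8) := (Real.exp_add _ _).symm
      _ = Real.exp (-2 * ε ^ 2 / (1 / (m₁ : ℝ) + 1 / (m₂ : ℝ))) := by
          rw [← hvdef]
          congr 1
          rw [htdef]
          field_simp
          ring
  have h := ENNReal.ofReal_le_ofReal hfinal
  rwa [ENNReal.ofReal_toReal (measure_ne_top P _)] at h
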